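/- Let w = x y x² y x⁴ y x⁸ y x¹⁶ y ⋯ over the alphabet {x, y}, where the block of x's before the (k+1)-st occurrence of y has length 2^k (with the first block having length 1). Then a factor z of w lies in Rad(w) if and only if z contains the letter y. -/

import Mathlib

/-- The factor of `w` of length `n` starting at position `i`. -/
def factorAt {A : Type*} (w : ℕ → A) (i n : ℕ) : List A :=
  (List.range n).map (fun k => w (i + k))

/-- `u` is a (finite, contiguous) factor of the right-infinite word `w`. -/
def IsFactorOf {A : Type*} (u : List A) (w : ℕ → A) : Prop :=
  ∃ i, u = factorAt w i u.length

/-- The set of factors of `w`. -/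
def Fac {A : Type*} (w : ℕ → A) : Set (List A) := {u | IsFactorOf u w}

/-- `w` is recurrent: every factor occurs at arbitrarily large positions. -/
def Recurrent {A : Type*} (w : ℕ → A) : Prop :=
  ∀ u ∈ Fac w, ∀ N : ℕ, ∃ i ≥ N, u = factorAt w i u.length

/-- `w` is uniformly recurrent: each factor occurs in every sufficiently long factor. -/
def UniformlyRecurrent {A : Type*} (w : ℕ → A) : Prop :=
  ∀ u ∈ Fac w, ∃ N : ℕ, ∀ y ∈ Fac w, y.length = N → u <:+: y

/-- `w` is (purely) periodic. -/
def PeriodicWord {A : Type*} (w : ℕ → A) : Prop :=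
  ∃ p ≥ 1, ∀ n, w (n + p) = w n

/-- `w` is eventually periodic. -/
def EventuallyPeriodicWord {A : Type*} (w : ℕ → A) : Prop :=
  ∃ p ≥ 1, ∃ N, ∀ n ≥ N, w (n + p) = w n

/-- The factor complexity function of `w`. -/
noncomputable def cplx {A : Type*} (w : ℕ → A) (n : ℕ) : ℕ :=
  Set.ncard {u | u ∈ Fac w ∧ u.length = n}

/-- A set of finite words is factor-closed. -/
def FactorClosed {A : Type*} (S : Set (List A)) : Prop :=
  ∀ y ∈ S, ∀ u, u <:+: y → u ∈ S

/-- The radical of `w`. -/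
def Rad {A : Type*} (w : ℕ → A) : Set (List A) :=
  {z | z ∈ Fac w ∧ ∀ Y : Finset (List A),
    (∀ y ∈ Y, y ∈ Fac w ∧ z <:+: y) →
    ∃ N : ℕ, ∀ L : List (List A), L.length = N → (∀ y ∈ L, y ∈ Y) →
      L.flatten ∉ Fac w}

/-- The recurrent spectrum of `w`, with classes identified with their factor sets. -/
def RecSpec {A : Type*} (w : ℕ → A) : Set (Set (List A)) :=
  {F | ∃ v : ℕ → A, Recurrent v ∧ F = Fac v ∧ Fac v ⊆ Fac w}

-- strict mono of f
lemma fpos_strictMono : StrictMono (fun k => 2 ^ (k + 1) + k) := by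
  apply strictMono_nat_of_lt_succ
  intro n
  simp only [pow_succ]
  have : 1 ≤ 2 ^ (n+1) := Nat.one_le_two_pow
  omega

-- all-zero words are factors
lemma zeros_mem_Fac (w : ℕ → Fin 2)
    (hw : ∀ n, (w n = 1 ↔ ∃ k : ℕ, n + 1 = 2 ^ (k + 1) + k))
    (u : List (Fin 2)) (hu : ∀ a ∈ u, a = 0) : u ∈ Fac w := by
  set m := u.length with hm
  refine ⟨2 ^ (m + 1) + m, ?_⟩
  apply List.ext_getElem (by simp [factorAt])
  intro j hj hj'
  have hju : u[j] = 0 := hu _ (List.getElem_mem hj)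
  have hwj : w (2 ^ (m+1) + m + j) = 0 := by
    by_contra hne
    have h1 : w (2 ^ (m+1) + m + j) = 1 := by
      have : ∀ a : Fin 2, a ≠ 0 → a = 1 := by decide
      exact this _ hne
    obtain ⟨k', hk'⟩ := (hw _).1 h1
    -- 2^(m+1)+m < 2^(k'+1)+k' = 2^(m+1)+m+j+1 ≤ 2^(m+1)+m+m < 2^(m+2)+m+1
    have hlt : (2:ℕ) ^ (m+1) + m < 2 ^ (k'+1) + k' := by omega
    have hm2 : (2:ℕ) ^ (k'+1) + k' < 2 ^ (m+1+1) + (m+1) := by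
      have hjm : j < m := hj
      have : m < 2 ^ m := (Nat.lt_two_pow_self (n := m))
      have : (2:ℕ) ^ (m+1+1) = 2 ^ (m+1) * 2 := by rw [pow_succ]
      omega
    have h1' := fpos_strictMono.lt_iff_lt.mp hlt
    have h2' := fpos_strictMono.lt_iff_lt.mp hm2
    omega
  simp only [factorAt, List.getElem_map, List.getElem_range]
  rw [hju, hwj]

-- count of ones as a Finset card
lemma count_ones (w : ℕ → Fin 2) (i : ℕ) : ∀ n,
    ((List.range n).map (fun k => w (i + k))).count 1
      = ((Finset.range n).filter (fun j => w (i + j) = 1)).card := by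
  intro n
  induction n with
  | zero => simp
  | succ n ih =>
    rw [List.range_succ, Finset.range_add_one, List.map_append, List.count_append,
      Finset.filter_insert]
    by_cases h : w (i + n) = 1
    · rw [if_pos h, Finset.card_insert_of_notMem (by simp)]
      simp [h, ih]
    · rw [if_neg h]
      simp [List.count_cons, h, ih]

-- main length bound
lemma length_bound (w : ℕ → Fin 2)
    (hw : ∀ n, (w n = 1 ↔ ∃ k : ℕ, n + 1 = 2 ^ (k + 1) + k)) :
    ∀ u ∈ Fac w, 2 ^ (u.count 1) ≤ u.length + 1 := by
  rintro u ⟨i, hu⟩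
  set ℓ := u.length with hℓ
  rcases Nat.eq_zero_or_pos (u.count 1) with h0 | hcpos
  · simp [h0]
  set S := (Finset.range ℓ).filter (fun j => w (i + j) = 1) with hS
  have hcard : u.count 1 = S.card := by
    conv_lhs => rw [hu]
    exact count_ones w i ℓ
  set g : ℕ → ℕ := fun m => Nat.findGreatest (fun k => 2^(k+1)+k ≤ m) m with hg
  have hgspec : ∀ m k, m = 2^(k+1)+k → g m = k := by
    intro m k hk
    have hkm : k ≤ m := by have : 1 ≤ 2^(k+1) := Nat.one_le_two_pow; omega
    have h1 : k ≤ g m :=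
      Nat.le_findGreatest (P := fun k => 2^(k+1)+k ≤ m) hkm (le_of_eq hk.symm)
    have h2 : 2^(g m + 1) + g m ≤ m :=
      Nat.findGreatest_spec (P := fun k => 2^(k+1)+k ≤ m) hkm (le_of_eq hk.symm)
    have h2' : 2^(g m + 1) + g m ≤ 2^(k+1)+k := le_trans h2 (le_of_eq hk)
    have h3 : g m ≤ k := fpos_strictMono.le_iff_le.mp h2'
    omega
  set T := (Finset.range (i+ℓ+1)).filter
    (fun k => i+1 ≤ 2^(k+1)+k ∧ 2^(k+1)+k ≤ i+ℓ) with hT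
  have hmaps : ∀ j ∈ S, g (i+j+1) ∈ T := by
    intro j hj
    rw [hS, Finset.mem_filter, Finset.mem_range] at hj
    obtain ⟨hjl, hj1⟩ := hj
    obtain ⟨k, hk⟩ := (hw _).1 hj1
    have hgk : g (i+j+1) = k := hgspec _ _ (by omega)
    rw [hT, Finset.mem_filter, Finset.mem_range, hgk]
    have : 1 ≤ 2^(k+1) := Nat.one_le_two_pow
    refine ⟨by omega, by omega, by omega⟩
  have hinj : Set.InjOn (fun j => g (i+j+1)) ↑S := by
    intro j1 hj1 j2 hj2 heq
    simp only [hS, Finset.coe_filter, Set.mem_setOf_eq, Finset.mem_range] at hj1 hj2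
    obtain ⟨k1, hk1⟩ := (hw _).1 hj1.2
    obtain ⟨k2, hk2⟩ := (hw _).1 hj2.2
    have e1 : g (i+j1+1) = k1 := hgspec _ _ (by omega)
    have e2 : g (i+j2+1) = k2 := hgspec _ _ (by omega)
    simp only at heq
    rw [e1, e2] at heq
    subst heq
    omega
  have hcT : u.count 1 ≤ T.card := hcard ▸ Finset.card_le_card_of_injOn _ hmaps hinj
  have hTne : T.Nonempty := Finset.card_pos.mp (by omega)
  obtain ⟨a, b, hamem, hbmem, hab, hTcard⟩ :
      ∃ a b, a ∈ T ∧ b ∈ T ∧ a ≤ b ∧ T.card ≤ b - a + 1 := by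
    refine ⟨T.min' hTne, T.max' hTne, T.min'_mem hTne, T.max'_mem hTne,
      T.min'_le _ (T.max'_mem hTne), ?_⟩
    have hsub : T ⊆ Finset.Icc (T.min' hTne) (T.max' hTne) := fun x hx =>
      Finset.mem_Icc.mpr ⟨T.min'_le _ hx, T.le_max' _ hx⟩
    have := Finset.card_le_card hsub
    rw [Nat.card_Icc] at this
    omega
  have hmemT : ∀ x ∈ T, i+1 ≤ 2^(x+1)+x ∧ 2^(x+1)+x ≤ i+ℓ := by
    intro x hx
    rw [hT, Finset.mem_filter] at hx
    exact hx.2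
  have haf := (hmemT _ hamem).1
  have hbf := (hmemT _ hbmem).2
  -- arithmetic
  obtain ⟨d, rfl⟩ : ∃ d, b = a + d := ⟨b - a, by omega⟩
  have hc : u.count 1 ≤ d + 1 := by omega
  have hpow : (2:ℕ) ^ (u.count 1) ≤ 2 ^ (d+1) := Nat.pow_le_pow_right (by norm_num) hc
  have key : 2 ^ (d+1) ≤ ℓ + 1 := by
    have hsplit : (2:ℕ) ^ (a+d+1) = 2^(a+1) * 2^d := by
      rw [← pow_add]; ring_nf
    rw [hsplit] at hbf
    have hP : 2 ≤ (2:ℕ)^(a+1) := by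
      have : (2:ℕ)^1 ≤ 2^(a+1) := Nat.pow_le_pow_right (by norm_num) (by omega)
      simpa using this
    have hQ : 1 ≤ (2:ℕ)^d := Nat.one_le_two_pow
    obtain ⟨p, hp⟩ : ∃ p, (2:ℕ)^(a+1) = p + 2 := ⟨2^(a+1) - 2, by omega⟩
    obtain ⟨q, hq⟩ : ∃ q, (2:ℕ)^d = q + 1 := ⟨2^d - 1, by omega⟩
    rw [hp, hq] at hbf
    rw [pow_succ, hq]
    have hexp : (p+2)*(q+1) = p*q + p + 2*q + 2 := by ring
    rw [hexp] at hbf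
    -- hbf : p*q + p + 2*q + 2 + (a+d) ≤ i + ℓ, haf : i+1 ≤ p+2+a
    nlinarith [Nat.zero_le (p*q)]
  omega

lemma two_mul_lt (m : ℕ) : 2*(m+3) < 2^(m+3) := by
  induction m with
  | zero => norm_num
  | succ n ih =>
    have : 1 ≤ (2:ℕ)^(n+3) := Nat.one_le_two_pow
    rw [pow_succ]
    omega

lemma len_le_sum : ∀ l : List ℕ, (∀ x ∈ l, 1 ≤ x) → l.length ≤ l.sum := by
  intro l hl
  induction l with
  | nil => simp
  | cons x xs ih =>
    simp only [List.length_cons, List.sum_cons]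
    have h1 := hl x (by simp)
    have h2 := ih (fun y hy => hl y (by simp [hy]))
    omega

theorem radical_of_power_block_word (w : ℕ → Fin 2)
    (hw : ∀ n, (w n = 1 ↔ ∃ k : ℕ, n + 1 = 2 ^ (k + 1) + k)) :
    ∀ z ∈ Fac w, (z ∈ Rad w ↔ (1 : Fin 2) ∈ z) := by
  intro z hz
  constructor
  · -- z ∈ Rad w → 1 ∈ z
    intro hrad
    by_contra hz1
    obtain ⟨-, hprop⟩ := hrad
    obtain ⟨N, hN⟩ := hprop ({z} : Finset (List (Fin 2))) (by
      intro y hy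
      rw [Finset.mem_singleton] at hy
      rw [hy]
      exact ⟨hz, List.infix_refl z⟩)
    refine hN (List.replicate N z) (by simp) ?_ ?_
    · intro y hy
      rw [Finset.mem_singleton]
      exact List.eq_of_mem_replicate hy
    · apply zeros_mem_Fac w hw
      intro a ha
      rw [List.mem_flatten] at ha
      obtain ⟨l, hl, hal⟩ := ha
      have hlz : l = z := List.eq_of_mem_replicate hl
      subst hlz
      have hane : a ≠ 1 := fun h => hz1 (h ▸ hal)
      have : ∀ b : Fin 2, b ≠ 1 → b = 0 := by decide
      exact this a hane
  · -- 1 ∈ z → z ∈ Rad w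
    intro h1z
    refine ⟨hz, ?_⟩
    intro Y hY
    set M := Y.sup List.length with hM
    refine ⟨2 ^ (M + 3), ?_⟩
    intro L hL hLY hmem
    set N := 2 ^ (M + 3) with hN
    -- each element of L contains a 1
    have hone : ∀ y ∈ L, 1 ≤ y.count 1 := by
      intro y hy
      have hzy := (hY y (hLY y hy)).2
      exact List.one_le_count_iff.mpr (hzy.subset h1z)
    -- count bound
    have hcount : N ≤ L.flatten.count 1 := by
      rw [List.count_flatten]
      calc N = L.length := hL.symm
        _ = (L.map (List.count 1)).length := by simp
        _ ≤ (L.map (List.count 1)).sum := by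
            apply len_le_sum
            intro x hx
            rw [List.mem_map] at hx
            obtain ⟨y, hy, rfl⟩ := hx
            exact hone y hy
    -- length bound
    have hlen : L.flatten.length ≤ N * M := by
      rw [List.length_flatten]
      have := List.sum_le_card_nsmul (L.map List.length) M (by
        intro x hx
        rw [List.mem_map] at hx
        obtain ⟨y, hy, rfl⟩ := hx
        exact Finset.le_sup (f := List.length) (hLY y hy))
      simpa [hL, smul_eq_mul] using this
    have hbound := length_bound w hw _ hmem
    have h1 : (2:ℕ) ^ N ≤ 2 ^ (L.flatten.count 1) :=
      Nat.pow_le_pow_right (by norm_num) hcount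
    have h2 : (2:ℕ) ^ N ≤ N * M + 1 := by omega
    -- contradiction: N * M + 1 < 2 ^ N
    have h3 : N * M + 1 ≤ N * (M + 3) := by
      have hN1 : 1 ≤ N := hN ▸ Nat.one_le_two_pow
      have : N * (M + 3) = N * M + 3 * N := by ring
      omega
    have h4 : N * (M + 3) ≤ N * N := by
      apply Nat.mul_le_mul_left
      exact le_of_lt ((Nat.lt_two_pow_self (n := M + 3)))
    have h5 : N * N = 2 ^ (2 * (M + 3)) := by
      rw [hN, ← pow_add]
      ring_nf
    have h6 : (2:ℕ) ^ (2 * (M + 3)) < 2 ^ N := by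
      apply Nat.pow_lt_pow_right (by norm_num)
      rw [hN]
      exact two_mul_lt M
    omega
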